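/- arXiv:1501.04615 — 2 statements merged into one kernel-verified Lean document; each statement's English description precedes it below -/
import Mathlib

section
/- For every positive integer n, Q_n(t) = (n+1) · N^A_n(t) + Σ_{k=1}^n N^A_{k-1}(t) · Q_{n-k}(t). -/
open Finset

/-- Type A Narayana polynomial `N^A_n(t)`, with convention `N^A_0 = 1`. -/
noncomputable def NA (n : ℕ) (t : ℝ) : ℝ :=
  if n = 0 then 1 else
    ∑ k ∈ Finset.Icc 1 n, (1 / (k : ℝ)) * ((n - 1).choose (k - 1) : ℝ) * (n.choose (k - 1) : ℝ) * t ^ k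

/-- Type B Narayana polynomial `N^B_n(t)`. -/
noncomputable def NB (n : ℕ) (t : ℝ) : ℝ :=
  ∑ k ∈ Finset.range (n + 1), ((n.choose k : ℝ)) ^ 2 * t ^ k

/-- `Q_n(t) = ∑_{k=0}^n C(n,k) C(n+1,k) t^k`, the derivative of `N^A_{n+1}`. -/
noncomputable def Qp (n : ℕ) (t : ℝ) : ℝ :=
  ∑ k ∈ Finset.range (n + 1), ((n.choose k : ℝ)) * (((n + 1).choose k : ℝ)) * t ^ k

/-- auxiliary: the convolution sum `T_n = ∑_{m=0}^{n-1} N^A_m · Q_{n-1-m}`. -/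
noncomputable def Tsum (n : ℕ) (t : ℝ) : ℝ :=
  ∑ m ∈ Finset.range n, NA m t * Qp (n - 1 - m) t

/-- auxiliary: the Narayana convolution `∑_{m=0}^{n} N^A_m · N^A_{n-m}`. -/
noncomputable def Cv (n : ℕ) (t : ℝ) : ℝ :=
  ∑ m ∈ Finset.range (n + 1), NA m t * NA (n - m) t

/-- auxiliary: derivative of `NA j`. -/
noncomputable def dN (j : ℕ) (t : ℝ) : ℝ := if j = 0 then 0 else Qp (j - 1) t

lemma sum_Icc_one (n : ℕ) (f : ℕ → ℝ) :
    ∑ k ∈ Finset.Icc 1 n, f k = ∑ i ∈ Finset.range n, f (i + 1) := by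
  rw [← Finset.Ico_add_one_right_eq_Icc, Finset.sum_Ico_eq_sum_range]
  simp [add_comm]

lemma NA_eq (n : ℕ) (hn : 1 ≤ n) (t : ℝ) :
    NA n t = ∑ i ∈ Finset.range n,
      (1 / ((i:ℝ) + 1)) * ((n - 1).choose i : ℝ) * (n.choose i : ℝ) * t ^ (i + 1) := by
  rw [NA, if_neg (by omega), sum_Icc_one]
  simp

lemma NA_zero (t : ℝ) : NA 0 t = 1 := by simp [NA]

lemma Qp_zero (t : ℝ) : Qp 0 t = 1 := by simp [Qp]

lemma NA_at_zero (n : ℕ) (hn : 1 ≤ n) : NA n 0 = 0 := by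
  rw [NA_eq n hn]
  exact Finset.sum_eq_zero (fun i _ => by simp)

lemma Ecoef (n i : ℕ) (hi : i ≤ n) :
    (((n+1).choose (i+1) : ℝ) * ((n+2).choose (i+1)) + (n.choose i : ℝ) * ((n+1).choose i)
      - (n.choose (i+1) : ℝ) * ((n+1).choose (i+1))) * ((i:ℝ)+1)
    = (2*(n:ℝ)+3) * ((n.choose i : ℝ) * ((n+1).choose i)) := by
  have hk : ((i:ℝ)+1) ≠ 0 := by positivity
  have hm : ((n:ℝ)+1-i) ≠ 0 := by
    have : (i:ℝ) ≤ (n:ℝ) := by exact_mod_cast hi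
    nlinarith
  have c1 : ((n:ℝ)+2) * ((n+1).choose i : ℝ) = ((n+2).choose (i+1) : ℝ) * ((i:ℝ)+1) := by
    exact_mod_cast Nat.add_one_mul_choose_eq (n+1) i
  have c2 : ((n:ℝ)+1) * (n.choose i : ℝ) = ((n+1).choose (i+1) : ℝ) * ((i:ℝ)+1) := by
    exact_mod_cast Nat.add_one_mul_choose_eq n i
  have c3 : ((n+1).choose (i+1) : ℝ) * ((i:ℝ)+1) = ((n+1).choose i : ℝ) * ((n:ℝ)+1-i) := by
    have h' : (((n+1).choose (i+1) : ℝ)) * ((i:ℝ)+1) = ((n+1).choose i : ℝ) * (((n+1-i : ℕ)) : ℝ) := by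
      exact_mod_cast Nat.choose_succ_right_eq (n+1) i
    rw [h', Nat.cast_sub (by omega)]
    push_cast; ring
  have c4 : (n.choose (i+1) : ℝ) * ((i:ℝ)+1) = (n.choose i : ℝ) * ((n:ℝ)-i) := by
    have h' : ((n.choose (i+1) : ℝ)) * ((i:ℝ)+1) = (n.choose i : ℝ) * (((n-i : ℕ)) : ℝ) := by
      exact_mod_cast Nat.choose_succ_right_eq n i
    rw [h', Nat.cast_sub hi]
  have hA : ((n+1).choose (i+1) : ℝ) = ((n:ℝ)+1) * (n.choose i : ℝ) / ((i:ℝ)+1) := by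
    field_simp; linarith [c2]
  have hB : ((n+1).choose i : ℝ) = ((n+1).choose (i+1) : ℝ) * ((i:ℝ)+1) / ((n:ℝ)+1-i) := by
    field_simp; linarith [c3]
  have hP : ((n+2).choose (i+1) : ℝ) = ((n:ℝ)+2) * ((n+1).choose i : ℝ) / ((i:ℝ)+1) := by
    field_simp; linarith [c1]
  have hv : (n.choose (i+1) : ℝ) = (n.choose i : ℝ) * ((n:ℝ)-i) / ((i:ℝ)+1) := by
    field_simp; linarith [c4]
  rw [hP, hB, hv, hA]
  field_simp
  ring

lemma lemE (n : ℕ) (t : ℝ) :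
    Qp (n+1) t + (t - 1) * Qp n t = (2*(n:ℝ)+3) * NA (n+1) t := by
  have hQ1 : Qp (n+1) t
      = (∑ i ∈ Finset.range (n+1), ((n+1).choose (i+1) : ℝ) * ((n+2).choose (i+1) : ℝ) * t^(i+1)) + 1 := by
    rw [Qp, Finset.sum_range_succ']
    norm_num
  have hQt : t * Qp n t
      = ∑ i ∈ Finset.range (n+1), (n.choose i : ℝ) * ((n+1).choose i : ℝ) * t^(i+1) := by
    rw [Qp, Finset.mul_sum]
    exact Finset.sum_congr rfl (fun i _ => by ring)
  have hQ0 : Qp n t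
      = (∑ i ∈ Finset.range (n+1), (n.choose (i+1) : ℝ) * ((n+1).choose (i+1) : ℝ) * t^(i+1)) + 1 := by
    rw [Qp, Finset.sum_range_succ', Finset.sum_range_succ]
    norm_num [Nat.choose_succ_self]
  have hN : (2*(n:ℝ)+3) * NA (n+1) t
      = ∑ i ∈ Finset.range (n+1), (2*(n:ℝ)+3) * ((1/((i:ℝ)+1)) * (n.choose i : ℝ) * ((n+1).choose i : ℝ)) * t^(i+1) := by
    rw [NA_eq (n+1) (by omega), Finset.mul_sum]
    refine Finset.sum_congr rfl (fun i _ => ?_)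
    norm_num
    ring
  have key : (∑ i ∈ Finset.range (n+1), ((n+1).choose (i+1) : ℝ) * ((n+2).choose (i+1) : ℝ) * t^(i+1))
      + (∑ i ∈ Finset.range (n+1), (n.choose i : ℝ) * ((n+1).choose i : ℝ) * t^(i+1))
      - (∑ i ∈ Finset.range (n+1), (n.choose (i+1) : ℝ) * ((n+1).choose (i+1) : ℝ) * t^(i+1))
      = ∑ i ∈ Finset.range (n+1), (2*(n:ℝ)+3) * ((1/((i:ℝ)+1)) * (n.choose i : ℝ) * ((n+1).choose i : ℝ)) * t^(i+1) := by
    rw [← Finset.sum_add_distrib, ← Finset.sum_sub_distrib]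
    refine Finset.sum_congr rfl (fun i hi => ?_)
    have hi' : i ≤ n := by simpa using Nat.lt_succ_iff.mp (Finset.mem_range.mp hi)
    have h := Ecoef n i hi'
    have hk : ((i:ℝ)+1) ≠ 0 := by positivity
    field_simp
    linear_combination t^(i+1) * h
  have hsplit : (t-1)*Qp n t = t*Qp n t - Qp n t := by ring
  rw [hN, ← key, hQ1, hsplit, hQt, hQ0]
  ring

lemma hasDerivNA (m : ℕ) (t : ℝ) : HasDerivAt (fun s => NA (m+1) s) (Qp m t) t := by
  have h1 : (fun s => NA (m+1) s)
      = (fun s => ∑ i ∈ Finset.range (m+1),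
          (1 / ((i:ℝ) + 1)) * (m.choose i : ℝ) * ((m+1).choose i : ℝ) * s ^ (i + 1)) := by
    funext s
    simpa using NA_eq (m+1) (by omega) s
  rw [h1]
  have h2 : HasDerivAt (fun s => ∑ i ∈ Finset.range (m+1),
      (1 / ((i:ℝ) + 1)) * (m.choose i : ℝ) * ((m+1).choose i : ℝ) * s ^ (i + 1))
      (∑ i ∈ Finset.range (m+1),
        (1 / ((i:ℝ) + 1)) * (m.choose i : ℝ) * ((m+1).choose i : ℝ) * (((i:ℝ)+1) * t ^ i)) t := by
    apply HasDerivAt.fun_sum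
    intro i _
    have hp : HasDerivAt (fun s : ℝ => s ^ (i+1)) (((i:ℝ)+1) * t ^ i) t := by
      simpa using hasDerivAt_pow (i+1) t
    exact hp.const_mul _
  convert h2 using 1
  rw [Qp]
  refine Finset.sum_congr rfl (fun i _ => ?_)
  have : ((i:ℝ)+1) ≠ 0 := by positivity
  field_simp

lemma hasDerivNA' (j : ℕ) (t : ℝ) : HasDerivAt (fun s => NA j s) (dN j t) t := by
  cases j with
  | zero => simpa [NA, dN] using (hasDerivAt_const t (1:ℝ))
  | succ m => simpa [dN] using hasDerivNA m t

lemma hasDerivCv (m : ℕ) (t : ℝ) : HasDerivAt (fun s => Cv m s) (2 * Tsum m t) t := by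
  have h2 : HasDerivAt (fun s => ∑ j ∈ Finset.range (m+1), NA j s * NA (m-j) s)
      (∑ j ∈ Finset.range (m+1), (dN j t * NA (m-j) t + NA j t * dN (m-j) t)) t := by
    apply HasDerivAt.fun_sum
    intro j _
    exact (hasDerivNA' j t).mul (hasDerivNA' (m-j) t)
  have h3 : (∑ j ∈ Finset.range (m+1), (dN j t * NA (m-j) t + NA j t * dN (m-j) t))
      = 2 * Tsum m t := by
    rw [Finset.sum_add_distrib]
    have hA : ∑ j ∈ Finset.range (m+1), dN j t * NA (m-j) t = Tsum m t := by
      rw [Finset.sum_range_succ']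
      have hd0 : dN 0 t = 0 := by simp [dN]
      rw [hd0, zero_mul, add_zero, Tsum]
      have : ∑ j ∈ Finset.range m, dN (j+1) t * NA (m-(j+1)) t
          = ∑ j ∈ Finset.range m, Qp j t * NA (m-1-j) t := by
        refine Finset.sum_congr rfl (fun j hj => ?_)
        have : m - (j+1) = m - 1 - j := by omega
        simp [dN, this]
      rw [this, ← Finset.sum_range_reflect (fun j => Qp j t * NA (m-1-j) t) m]
      refine Finset.sum_congr rfl (fun j hj => ?_)
      have hj' : j < m := Finset.mem_range.mp hj
      have e1 : m - 1 - (m - 1 - j) = j := by omega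
      rw [e1]
      ring
    have hB : ∑ j ∈ Finset.range (m+1), NA j t * dN (m-j) t = Tsum m t := by
      rw [Finset.sum_range_succ]
      have hmm : m - m = 0 := by omega
      have hd0 : dN (m-m) t = 0 := by simp [dN, hmm]
      rw [hd0, mul_zero, add_zero, Tsum]
      refine Finset.sum_congr rfl (fun j hj => ?_)
      have hj' : j < m := Finset.mem_range.mp hj
      have h0 : m - j ≠ 0 := by omega
      have h1 : m - j - 1 = m - 1 - j := by omega
      simp [dN, h0, h1]
    rw [hA, hB]; ring
  rw [← h3]
  exact h2

lemma Trec (n : ℕ) (hn : 1 ≤ n) (t : ℝ) :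
    Tsum (n+1) t = ((n:ℝ)+1) * Cv n t - (t-1) * Tsum n t := by
  set S := ∑ m ∈ Finset.range (n+1), (2*((n:ℝ)-m)+1) * (NA m t * NA (n-m) t) with hSdef
  have hrefl := Finset.sum_range_reflect
    (fun m => (2*((n:ℝ)-m)+1) * (NA m t * NA (n-m) t)) (n+1)
  have h2 : ∑ j ∈ Finset.range (n+1), (2*((n:ℝ)-(((n+1)-1-j : ℕ):ℝ))+1)
        * (NA ((n+1)-1-j) t * NA (n-((n+1)-1-j)) t)
      = ∑ j ∈ Finset.range (n+1), (2*(j:ℝ)+1) * (NA (n-j) t * NA j t) := by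
    refine Finset.sum_congr rfl (fun j hj => ?_)
    have hj' : j ≤ n := Nat.lt_succ_iff.mp (Finset.mem_range.mp hj)
    have e1 : n+1-1-j = n-j := by omega
    have e2 : n-(n-j) = j := by omega
    rw [e1, e2, Nat.cast_sub hj']
    ring
  have hSalt : S = ∑ j ∈ Finset.range (n+1), (2*(j:ℝ)+1) * (NA (n-j) t * NA j t) := by
    rw [← h2]
    exact hrefl.symm
  have hdouble : S + S = (2*(n:ℝ)+2) * Cv n t := by
    nth_rewrite 2 [hSalt]
    rw [hSdef, ← Finset.sum_add_distrib, Cv, Finset.mul_sum]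
    refine Finset.sum_congr rfl (fun j hj => ?_)
    ring
  have hS : S = ((n:ℝ)+1) * Cv n t := by linarith
  rw [Tsum]
  simp only [Nat.add_sub_cancel]
  rw [Finset.sum_range_succ]
  have hterm : ∀ m ∈ Finset.range n, NA m t * Qp (n-m) t
      = (2*((n:ℝ)-m)+1) * (NA m t * NA (n-m) t) - (t-1) * (NA m t * Qp (n-1-m) t) := by
    intro m hm
    have hm' : m < n := Finset.mem_range.mp hm
    have hE := lemE (n-m-1) t
    have e1 : n-m-1+1 = n-m := by omega
    rw [e1] at hE
    have e3 : ((n-m-1:ℕ):ℝ) = (n:ℝ)-m-1 := by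
      have e4 : n-m-1 = n-(m+1) := by omega
      rw [e4, Nat.cast_sub (by omega)]
      push_cast; ring
    rw [e3] at hE
    have e2 : n-m-1 = n-1-m := by omega
    rw [e2] at hE
    linear_combination NA m t * hE
  rw [Finset.sum_congr rfl hterm, Finset.sum_sub_distrib]
  have hpeel : ∑ m ∈ Finset.range n, (2*((n:ℝ)-m)+1) * (NA m t * NA (n-m) t)
      = S - (2*((n:ℝ)-n)+1) * (NA n t * NA (n-n) t) := by
    rw [hSdef, Finset.sum_range_succ]
    ring
  have hQT : ∑ m ∈ Finset.range n, (t-1) * (NA m t * Qp (n-1-m) t) = (t-1) * Tsum n t := by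
    rw [Tsum, Finset.mul_sum]
  rw [hpeel, hQT, hS]
  have hnn : n - n = 0 := by omega
  rw [hnn, NA_zero, Qp_zero]
  push_cast
  ring

lemma mainT (n : ℕ) (hn : 1 ≤ n) : ∀ t, Tsum n t = Qp n t - ((n:ℝ)+1) * NA n t := by
  induction n, hn using Nat.le_induction with
  | base =>
    intro t
    have h1 : Tsum 1 t = 1 := by
      simp [Tsum, NA_zero, Qp_zero]
    have h2 : Qp 1 t = 1 + 2*t := by
      rw [Qp]
      rw [Finset.sum_range_succ, Finset.sum_range_succ, Finset.sum_range_zero]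
      norm_num
    have h3 : NA 1 t = t := by
      rw [NA_eq 1 (le_refl 1)]
      norm_num
    rw [h1, h2, h3]
    norm_num
  | succ n hn ih =>
    intro t
    have key : ∀ s : ℝ, Cv n s = NA (n+1) s - (s-1) * NA n s := by
      have hF : ∀ s : ℝ, HasDerivAt (fun x => Cv n x - (NA (n+1) x - (x-1) * NA n x)) 0 s := by
        intro s
        have h1 := hasDerivCv n s
        have h2 := hasDerivNA n s
        have h3 : HasDerivAt (fun x => NA n x) (Qp (n-1) s) s := by
          have h := hasDerivNA (n-1) s
          rw [show n-1+1 = n from by omega] at h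
          exact h
        have hx : HasDerivAt (fun x : ℝ => x - 1) 1 s := by
          simpa using (hasDerivAt_id s).sub_const 1
        have h4 : HasDerivAt (fun x : ℝ => (x-1) * NA n x)
            (1 * NA n s + (s-1) * Qp (n-1) s) s := hx.mul h3
        have h5 := h1.fun_sub (h2.fun_sub h4)
        refine h5.congr_deriv (Eq.symm ?_)
        have hE := lemE (n-1) s
        rw [show n-1+1 = n from by omega] at hE
        rw [show ((n-1:ℕ):ℝ) = (n:ℝ)-1 from by rw [Nat.cast_sub hn]; norm_num] at hE
        have hT := ih s
        linear_combination (-2) * hT - hE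
      have hzero : (fun x => Cv n x - (NA (n+1) x - (x-1) * NA n x)) 0 = 0 := by
        have hCv0 : Cv n 0 = 0 := by
          rw [Cv]
          refine Finset.sum_eq_zero (fun m hm => ?_)
          rcases Nat.eq_zero_or_pos m with h | h
          · subst h
            rw [Nat.sub_zero, NA_at_zero n hn]
            ring
          · rw [NA_at_zero m h]
            ring
        simp [hCv0, NA_at_zero (n+1) (by omega), NA_at_zero n hn]
      intro s
      have hconst := is_const_of_deriv_eq_zero
        (f := fun x => Cv n x - (NA (n+1) x - (x-1) * NA n x))
        (fun x => (hF x).differentiableAt)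
        (fun x => (hF x).deriv) s 0
      have := hconst.trans hzero
      linarith [this]
    have hE := lemE n t
    rw [Trec n hn t, key t, ih t]
    push_cast
    linear_combination -hE

theorem stmt3 (n : ℕ) (hn : 1 ≤ n) (t : ℝ) :
    Qp n t = ((n : ℝ) + 1) * NA n t + ∑ k ∈ Finset.Icc 1 n, NA (k - 1) t * Qp (n - k) t := by
  have h := mainT n hn t
  have hsum : ∑ k ∈ Finset.Icc 1 n, NA (k-1) t * Qp (n-k) t = Tsum n t := by
    rw [sum_Icc_one, Tsum]
    refine Finset.sum_congr rfl (fun i hi => ?_)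
    have e2 : n - (i+1) = n - 1 - i := by omega
    simp [e2]
  rw [hsum]
  linarith
end

section
/- The generating function of type B Narayana polynomials satisfies Σ_{n=0}^∞ N^B_n(t) x^n = 1/√((1-(t-1)x)² - 4x), as an identity of formal power series in x (or for real x, t with |x| small enough), where N^B_n(t) = Σ_{k=0}^n binom(n,k)^2 t^k. -/
open Finset

/-- Quadratic binomial identity:
`C(n,k) C(n,k+1) + C(n,k+1) C(n,k+2) + (n+2) C(n,k) C(n,k+2) = n C(n,k+1)^2`. -/
lemma quadNB (n k : ℕ) :
    (n.choose k : ℝ) * (n.choose (k+1) : ℝ) + (n.choose (k+1) : ℝ) * (n.choose (k+2) : ℝ)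
      + ((n:ℝ)+2) * (n.choose k : ℝ) * (n.choose (k+2) : ℝ)
    = (n:ℝ) * (n.choose (k+1) : ℝ)^2 := by
  rcases Nat.lt_or_ge n (k+1) with h | h
  · rw [Nat.choose_eq_zero_of_lt h, Nat.choose_eq_zero_of_lt (show n < k+2 by omega)]
    push_cast; ring
  rcases Nat.lt_or_ge n (k+2) with h2 | h2
  · have hn : n = k+1 := by omega
    subst hn
    rw [Nat.choose_eq_zero_of_lt (show k+1 < k+2 by omega), Nat.choose_self,
      Nat.choose_succ_self_right]
    push_cast; ring
  obtain ⟨j, rfl⟩ : ∃ j, n = k+2+j := ⟨n - (k+2), by omega⟩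
  have hb' := Nat.choose_succ_right_eq (k+2+j) k
  have hc' := Nat.choose_succ_right_eq (k+2+j) (k+1)
  rw [show k+2+j - k = j+2 by omega] at hb'
  rw [show k+2+j - (k+1) = j+1 by omega] at hc'
  have hb : ((k+2+j).choose (k+1) : ℝ) * ((k:ℝ)+1) = ((k+2+j).choose k : ℝ) * ((j:ℝ)+2) := by
    exact_mod_cast congrArg (Nat.cast : ℕ → ℝ) hb'
  have hc : ((k+2+j).choose (k+2) : ℝ) * ((k:ℝ)+2) = ((k+2+j).choose (k+1) : ℝ) * ((j:ℝ)+1) := by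
    exact_mod_cast congrArg (Nat.cast : ℕ → ℝ) hc'
  set a := ((k+2+j).choose k : ℝ)
  set b := ((k+2+j).choose (k+1) : ℝ)
  set c := ((k+2+j).choose (k+2) : ℝ)
  have hk1 : ((k:ℝ)+1) ≠ 0 := by positivity
  have hk2 : ((k:ℝ)+2) ≠ 0 := by positivity
  have hbe : b = a * ((j:ℝ)+2) / ((k:ℝ)+1) := by field_simp; linarith [hb]
  have hce : c = b * ((j:ℝ)+1) / ((k:ℝ)+2) := by field_simp; linarith [hc]
  rw [hce, hbe]
  push_cast
  field_simp
  ring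

/-- The term-wise form of the three-term recurrence for type B Narayana polynomials. -/
lemma keyNB (n k : ℕ) :
    ((n:ℝ)+2) * (((n+2).choose (k+2) : ℝ))^2 + ((n:ℝ)+1) * ((n.choose k : ℝ))^2
      + ((n:ℝ)+1) * ((n.choose (k+2) : ℝ))^2
    = (2*(n:ℝ)+3) * (((n+1).choose (k+2) : ℝ))^2 + (2*(n:ℝ)+3) * (((n+1).choose (k+1) : ℝ))^2
      + (2*(n:ℝ)+2) * ((n.choose (k+1) : ℝ))^2 := by
  have p3 : (n+2).choose (k+2) = (n+1).choose (k+1) + (n+1).choose (k+2) :=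
    Nat.choose_succ_succ' (n+1) (k+1)
  have p1 : (n+1).choose (k+1) = n.choose k + n.choose (k+1) := Nat.choose_succ_succ' n k
  have p2 : (n+1).choose (k+2) = n.choose (k+1) + n.choose (k+2) := Nat.choose_succ_succ' n (k+1)
  rw [p3, p1, p2]
  push_cast
  linear_combination 2 * quadNB n k

/-- The type B Narayana polynomial as an honest polynomial. -/
noncomputable def PnB (n : ℕ) : Polynomial ℝ :=
  ∑ k ∈ Finset.range (n+1), Polynomial.C ((n.choose k : ℝ)^2) * Polynomial.X ^ k

lemma coeff_PnB (n k : ℕ) : (PnB n).coeff k = (n.choose k : ℝ)^2 := by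
  rw [PnB, Polynomial.finset_sum_coeff]
  simp_rw [Polynomial.coeff_C_mul, Polynomial.coeff_X_pow, mul_ite, mul_one, mul_zero]
  rw [Finset.sum_ite_eq (Finset.range (n+1)) k (fun i => ((n.choose i : ℝ))^2)]
  split_ifs with h
  · rfl
  · rw [Nat.choose_eq_zero_of_lt (by simpa using h)]
    norm_num

/-- Three-term recurrence, polynomial form. -/
lemma recPnB (n : ℕ) :
    Polynomial.C ((n:ℝ)+2) * PnB (n+2) + Polynomial.C ((n:ℝ)+1) * (Polynomial.X^2 * PnB n)
      + Polynomial.C ((n:ℝ)+1) * PnB n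
    = Polynomial.C (2*(n:ℝ)+3) * (Polynomial.X * PnB (n+1))
      + Polynomial.C (2*(n:ℝ)+3) * PnB (n+1)
      + Polynomial.C (2*(n:ℝ)+2) * (Polynomial.X * PnB n) := by
  ext k
  simp only [Polynomial.coeff_add, Polynomial.coeff_C_mul]
  match k with
  | 0 =>
      simp only [Polynomial.mul_coeff_zero, Polynomial.coeff_X_zero, Polynomial.coeff_X_pow_mul',
        zero_mul, coeff_PnB]
      norm_num
      ring
  | 1 =>
      rw [Polynomial.coeff_X_pow_mul', Polynomial.coeff_X_mul, Polynomial.coeff_X_mul,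
        if_neg (by omega)]
      simp only [coeff_PnB, Nat.choose_one_right, Nat.choose_zero_right]
      push_cast
      ring
  | (k+2) =>
      rw [Polynomial.coeff_X_pow_mul (PnB n) 2 k,
        show k+2 = (k+1)+1 from rfl, Polynomial.coeff_X_mul, Polynomial.coeff_X_mul]
      simp only [coeff_PnB]
      linear_combination keyNB n k

lemma NB_eval (n : ℕ) (t : ℝ) : NB n t = (PnB n).eval t := by
  simp [NB, PnB, Polynomial.eval_finset_sum]

/-- Three-term recurrence for type B Narayana polynomials. -/
lemma recNB (n : ℕ) (t : ℝ) :
    ((n:ℝ)+2) * NB (n+2) t + ((n:ℝ)+1) * (t^2 * NB n t) + ((n:ℝ)+1) * NB n t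
    = (2*(n:ℝ)+3) * (t * NB (n+1) t) + (2*(n:ℝ)+3) * NB (n+1) t
      + (2*(n:ℝ)+2) * (t * NB n t) := by
  have h := congrArg (Polynomial.eval t) (recPnB n)
  simpa [NB_eval] using h

lemma NB_zero (t : ℝ) : NB 0 t = 1 := by simp [NB]

lemma NB_one (t : ℝ) : NB 1 t = 1 + t := by
  simp [NB, Finset.sum_range_succ]

open PowerSeries

lemma coeff_mul_X' (φ : ℝ⟦X⟧) (n : ℕ) :
    PowerSeries.coeff (R := ℝ) n (φ * X) = if n = 0 then 0 else PowerSeries.coeff (R := ℝ) (n-1) φ := by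
  cases n with
  | zero => simpa using PowerSeries.coeff_zero_mul_X φ
  | succ n => simp [PowerSeries.coeff_succ_mul_X]

/-- The differential equation `2 f' g + g' f = 0`, from the coefficient recurrence. -/
lemma ode_general (b : ℕ → ℝ) (u v : ℝ)
    (h0 : 2 * b 1 = u * b 0)
    (h1 : 4 * b 2 = 3 * u * b 1 - 2 * v * b 0)
    (h2 : ∀ m : ℕ, 2 * ((m:ℝ)+3) * b (m+3)
      = (2*(m:ℝ)+5) * u * b (m+2) - (2*(m:ℝ)+4) * v * b (m+1)) :
    2 * (d⁄dX ℝ (PowerSeries.mk b))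
        * (1 - PowerSeries.C (R := ℝ) u * X + PowerSeries.C (R := ℝ) v * (X*X))
      + (d⁄dX ℝ (1 - PowerSeries.C (R := ℝ) u * X + PowerSeries.C (R := ℝ) v * (X*X)))
        * (PowerSeries.mk b) = 0 := by
  have hdG : d⁄dX ℝ (1 - PowerSeries.C (R := ℝ) u * X + PowerSeries.C (R := ℝ) v * (X*X))
      = - PowerSeries.C (R := ℝ) u + PowerSeries.C (R := ℝ) v * (X + X) := by
    simp [Derivation.leibniz, smul_eq_mul]
  rw [hdG]
  have goal0 : 2 * (d⁄dX ℝ (PowerSeries.mk b))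
        * (1 - PowerSeries.C (R := ℝ) u * X + PowerSeries.C (R := ℝ) v * (X*X))
      + (- PowerSeries.C (R := ℝ) u + PowerSeries.C (R := ℝ) v * (X + X)) * (PowerSeries.mk b)
    = PowerSeries.C (R := ℝ) 2 * (d⁄dX ℝ (PowerSeries.mk b))
      - PowerSeries.C (R := ℝ) 2 * (PowerSeries.C (R := ℝ) u * ((d⁄dX ℝ (PowerSeries.mk b)) * X))
      + PowerSeries.C (R := ℝ) 2 * (PowerSeries.C (R := ℝ) v * (((d⁄dX ℝ (PowerSeries.mk b)) * X) * X))
      - PowerSeries.C (R := ℝ) u * (PowerSeries.mk b)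
      + PowerSeries.C (R := ℝ) 2 * (PowerSeries.C (R := ℝ) v * ((PowerSeries.mk b) * X)) := by
    rw [show (PowerSeries.C (R := ℝ) 2 : ℝ⟦X⟧) = 2 from map_ofNat _ 2]
    ring
  rw [goal0]
  ext m
  simp only [map_add, map_sub, PowerSeries.coeff_C_mul, map_zero, coeff_mul_X',
    PowerSeries.coeff_derivative, PowerSeries.coeff_mk]
  match m with
  | 0 =>
      norm_num
      linarith [h0]
  | 1 =>
      norm_num
      linarith [h1]
  | (m+2) =>
      norm_num
      linarith [h2 m]

open PowerSeries in
theorem stmt15 (t : ℝ) :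
    (PowerSeries.mk fun n => NB n t) ^ 2
      * ((1 - PowerSeries.C (R := ℝ) (t - 1) * PowerSeries.X) ^ 2 - 4 * PowerSeries.X) = 1 := by
  have hG : (1 - PowerSeries.C (R := ℝ) (t - 1) * PowerSeries.X) ^ 2 - 4 * PowerSeries.X
      = 1 - PowerSeries.C (R := ℝ) (2*t+2) * X + PowerSeries.C (R := ℝ) ((t-1)^2) * (X*X) := by
    rw [show (2*t+2 : ℝ) = (t-1) + ((t-1) + 4) by ring, map_add, map_add, map_ofNat,
      show ((t-1)^2 : ℝ) = (t-1)*(t-1) by ring, map_mul]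
    ring
  have h0 : 2 * NB 1 t = (2*t+2) * NB 0 t := by
    rw [NB_zero, NB_one]; ring
  have h1 : 4 * NB 2 t = 3 * (2*t+2) * NB 1 t - 2 * ((t-1)^2) * NB 0 t := by
    have h := recNB 0 t
    push_cast at h
    linarith [h]
  have h2 : ∀ m : ℕ, 2 * ((m:ℝ)+3) * NB (m+3) t
      = (2*(m:ℝ)+5) * (2*t+2) * NB (m+2) t - (2*(m:ℝ)+4) * ((t-1)^2) * NB (m+1) t := by
    intro m
    have h := recNB (m+1) t
    push_cast at h
    linarith [h]
  have hode := ode_general (fun n => NB n t) (2*t+2) ((t-1)^2) h0 h1 h2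
  rw [hG]
  apply PowerSeries.derivative.ext
  · simp only [Derivation.leibniz, Derivation.leibniz_pow, smul_eq_mul,
      Derivation.map_one_eq_zero, pow_one, nsmul_eq_mul, Nat.cast_ofNat]
    linear_combination (PowerSeries.mk fun n => NB n t) * hode
  · simp [NB_zero]
end
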